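/- Let ψ be a Borel probability measure on (0,∞) with tilted mean F(λ) = ∫ s e^{λs} ψ(ds)/∫ e^{λs} ψ(ds) and suppose ∫ e^{ζτ} ψ(dτ) = ∞ where ζ = sup{λ : ∫ e^{λτ} ψ(dτ) < ∞}. Then lim_{λ→ζ} F(λ) = M, where M = inf{c ≥ 0 : ψ((c,∞)) = 0} ∈ [0,∞] is the essential supremum of ψ. -/

import Mathlib

open MeasureTheory Filter
open scoped ENNReal Topology

lemma aux_integrable (ψ : Measure ℝ) (hpos : ∀ᵐ s ∂ψ, 0 < s) {lam l : ℝ} (hll : lam < l)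
    (hfin : (∫⁻ s, ENNReal.ofReal (Real.exp (l * s)) ∂ψ) < ⊤) :
    Integrable (fun s => Real.exp (lam * s)) ψ ∧
      Integrable (fun s => s * Real.exp (lam * s)) ψ := by
  have hmeas1 : AEStronglyMeasurable (fun s : ℝ => Real.exp (lam * s)) ψ :=
    (Real.continuous_exp.comp (continuous_const.mul continuous_id)).aestronglyMeasurable
  have hmeas2 : AEStronglyMeasurable (fun s : ℝ => s * Real.exp (lam * s)) ψ :=
    (continuous_id.mul (Real.continuous_exp.comp (continuous_const.mul continuous_id))).aestronglyMeasurable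
  constructor
  · refine ⟨hmeas1, ?_⟩
    rw [hasFiniteIntegral_iff_ofReal (ae_of_all _ fun s => (Real.exp_pos _).le)]
    refine lt_of_le_of_lt (lintegral_mono_ae ?_) hfin
    filter_upwards [hpos] with s hs
    exact ENNReal.ofReal_le_ofReal (Real.exp_le_exp.2 (by nlinarith))
  · refine ⟨hmeas2, ?_⟩
    have hnn : 0 ≤ᵐ[ψ] fun s => s * Real.exp (lam * s) := by
      filter_upwards [hpos] with s hs
      positivity
    rw [hasFiniteIntegral_iff_ofReal hnn]
    have hbd : ∀ᵐ s ∂ψ, ENNReal.ofReal (s * Real.exp (lam * s)) ≤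
        ENNReal.ofReal ((l - lam)⁻¹) * ENNReal.ofReal (Real.exp (l * s)) := by
      filter_upwards [hpos] with s hs
      rw [← ENNReal.ofReal_mul (inv_nonneg.2 (by linarith))]
      apply ENNReal.ofReal_le_ofReal
      have h1 : (l - lam) * s ≤ Real.exp ((l - lam) * s) := by
        have := Real.add_one_le_exp ((l - lam) * s); linarith
      have h2 : s ≤ (l - lam)⁻¹ * Real.exp ((l - lam) * s) := by
        rw [le_inv_mul_iff₀ (by linarith)]
        linarith [mul_comm s (l - lam)]
      calc s * Real.exp (lam * s) ≤ ((l - lam)⁻¹ * Real.exp ((l - lam) * s)) * Real.exp (lam * s) := by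
            apply mul_le_mul_of_nonneg_right h2 (Real.exp_pos _).le
        _ = (l - lam)⁻¹ * Real.exp (l * s) := by
            rw [mul_assoc, ← Real.exp_add]; ring_nf
    refine lt_of_le_of_lt (lintegral_mono_ae hbd) ?_
    rw [lintegral_const_mul' _ _ ENNReal.ofReal_ne_top]
    exact ENNReal.mul_lt_top ENNReal.ofReal_lt_top hfin

theorem stmt_8 (ψ : Measure ℝ) [IsProbabilityMeasure ψ] (hψ : ψ (Set.Ioi 0)ᶜ = 0)
    (Θ : ℝ → ℝ≥0∞)
    (hΘ : ∀ l : ℝ, Θ l = ∫⁻ s, ENNReal.ofReal (Real.exp (l * s)) ∂ψ)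
    (ζ : EReal)
    (hζ : ζ = sSup ((fun l : ℝ => (l : EReal)) '' {l : ℝ | Θ l < ⊤}))
    (hblow : (⨆ (l : ℝ) (_ : (l : EReal) < ζ), Θ l) = ⊤)
    (F : ℝ → ℝ)
    (hF : ∀ l : ℝ, F l = (∫ s, s * Real.exp (l * s) ∂ψ) / ∫ s, Real.exp (l * s) ∂ψ)
    (M : EReal)
    (hM : M = sInf ((fun c : ℝ => (c : EReal)) '' {c : ℝ | 0 ≤ c ∧ ψ (Set.Ioi c) = 0})) :
    Tendsto (fun l : ℝ => (F l : EReal))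
      (comap (fun l : ℝ => (l : EReal)) (nhdsWithin ζ (Set.Iio ζ))) (nhds M) := by
  have hpos : ∀ᵐ s ∂ψ, 0 < s := by
    have h : (Set.Ioi (0:ℝ))ᶜ = {s : ℝ | ¬ 0 < s} := by ext s; simp [Set.mem_Ioi]
    rw [ae_iff, ← h]; exact hψ
  set L := comap (fun l : ℝ => (l : EReal)) (nhdsWithin ζ (Set.Iio ζ)) with hLdef
  set T : ℝ → ℝ := fun l => ∫ s, Real.exp (l * s) ∂ψ with hTdef
  set N : ℝ → ℝ := fun l => ∫ s, s * Real.exp (l * s) ∂ψ with hNdef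
  have hmono : Monotone Θ := by
    intro a b hab
    rw [hΘ a, hΘ b]
    refine lintegral_mono_ae ?_
    filter_upwards [hpos] with s hs
    exact ENNReal.ofReal_le_ofReal (Real.exp_le_exp.2 (by nlinarith))
  have hζ0 : (0:EReal) < ζ := by
    by_contra h
    push_neg at h
    have hle : (⨆ (l : ℝ) (_ : (l : EReal) < ζ), Θ l) ≤ 1 := by
      refine iSup_le fun l => iSup_le fun hl => ?_
      have hl0 : (l:ℝ) < 0 := by exact_mod_cast lt_of_lt_of_le hl h
      rw [hΘ l]
      calc ∫⁻ s, ENNReal.ofReal (Real.exp (l * s)) ∂ψ ≤ ∫⁻ _, 1 ∂ψ := by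
            refine lintegral_mono_ae ?_
            filter_upwards [hpos] with s hs
            calc ENNReal.ofReal (Real.exp (l * s)) ≤ ENNReal.ofReal 1 :=
                  ENNReal.ofReal_le_ofReal (Real.exp_le_one_iff.2 (by nlinarith))
              _ = 1 := by simp
        _ = 1 := by simp
    rw [hblow] at hle
    simp at hle
  have hex : ∀ l : ℝ, (l : EReal) < ζ → ∃ l' : ℝ, l < l' ∧ Θ l' < ⊤ := by
    intro l hl
    rw [hζ] at hl
    obtain ⟨x, hx, hlx⟩ := lt_sSup_iff.1 hl
    obtain ⟨l', hl', rfl⟩ := hx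
    have hlx' : (l : EReal) < (l' : EReal) := hlx
    exact ⟨l', by exact_mod_cast hlx', hl'⟩
  have hint : ∀ l : ℝ, (l : EReal) < ζ → Integrable (fun s => Real.exp (l * s)) ψ ∧
      Integrable (fun s => s * Real.exp (l * s)) ψ := by
    intro l hl
    obtain ⟨l', hll', hfin⟩ := hex l hl
    exact aux_integrable ψ hpos hll' (by rw [← hΘ]; exact hfin)
  have hTpos : ∀ l : ℝ, (l : EReal) < ζ → 0 < T l := by
    intro l hl
    refine (integral_pos_iff_support_of_nonneg_ae
      (ae_of_all _ fun s => (Real.exp_pos _).le) (hint l hl).1).2 ?_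
    have : (Function.support fun s : ℝ => Real.exp (l * s)) = Set.univ := by
      ext s; simp [Function.support, Real.exp_ne_zero]
    rw [this]
    simp
  have hTofReal : ∀ l : ℝ, (l : EReal) < ζ → ENNReal.ofReal (T l) = Θ l := by
    intro l hl
    rw [hΘ l]
    exact ofReal_integral_eq_lintegral_ofReal (hint l hl).1
      (ae_of_all _ fun s => (Real.exp_pos _).le)
  have hevlt : ∀ᶠ l : ℝ in L, (l : EReal) < ζ := by
    rw [hLdef, eventually_comap]
    filter_upwards [self_mem_nhdsWithin] with x hx a ha
    rw [ha]; exact hx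
  have hevgt : ∀ b : ℝ, (b : EReal) < ζ → ∀ᶠ l in L, b < l := by
    intro b hb
    rw [hLdef, eventually_comap]
    filter_upwards [mem_nhdsWithin_of_mem_nhds (Ioi_mem_nhds hb)] with x hx a ha
    rw [← ha] at hx
    exact_mod_cast Set.mem_Ioi.1 hx
  have hIoi0 : ψ (Set.Ioi (0:ℝ)) = 1 := by
    have := measure_add_measure_compl (μ := ψ) (measurableSet_Ioi (a := (0:ℝ)))
    rw [hψ, add_zero] at this
    simpa using this
  have hM0 : (0:EReal) < M := by
    by_contra h
    push_neg at h
    have hz : ∀ n : ℕ, ψ (Set.Ioi (1 / (n + 1 : ℝ))) = 0 := by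
      intro n
      have hlt : M < ((1 / (n + 1 : ℝ) : ℝ) : EReal) := by
        refine lt_of_le_of_lt h ?_
        exact_mod_cast (by positivity : (0:ℝ) < 1 / (n + 1 : ℝ))
      rw [hM] at hlt
      obtain ⟨x, hx, hxlt⟩ := sInf_lt_iff.1 hlt
      obtain ⟨c, ⟨hc0, hc⟩, rfl⟩ := hx
      have hxlt' : (c : EReal) < ((1 / (n + 1 : ℝ) : ℝ) : EReal) := hxlt
      have hcc : c ≤ 1 / (n + 1 : ℝ) := le_of_lt (by exact_mod_cast hxlt')
      exact measure_mono_null (Set.Ioi_subset_Ioi hcc) hc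
    have hU : Set.Ioi (0:ℝ) = ⋃ n : ℕ, Set.Ioi (1 / (n + 1 : ℝ)) := by
      ext x
      simp only [Set.mem_Ioi, Set.mem_iUnion]
      constructor
      · intro hx
        obtain ⟨n, hn⟩ := exists_nat_one_div_lt hx
        exact ⟨n, hn⟩
      · rintro ⟨n, hn⟩
        have : (0:ℝ) < 1 / (n + 1 : ℝ) := by positivity
        linarith
    have : ψ (Set.Ioi (0:ℝ)) = 0 := by
      rw [hU]
      exact measure_iUnion_null hz
    rw [hIoi0] at this
    exact one_ne_zero this
  have hIoiM : ∀ c : ℝ, 0 ≤ c → (c : EReal) < M → ψ (Set.Ioi c) ≠ 0 := by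
    intro c hc0 hcM h0
    have : M ≤ (c : EReal) := by
      rw [hM]
      exact sInf_le ⟨c, ⟨hc0, h0⟩, rfl⟩
    exact absurd hcM (not_lt.2 this)
  -- lower bound on the numerator
  have hNlow : ∀ c l : ℝ, 0 < c → 0 ≤ l → (l : EReal) < ζ →
      c * (T l - Real.exp (l * c)) ≤ N l := by
    intro c l hc hl0 hlζ
    obtain ⟨hI1, hI2⟩ := hint l hlζ
    have h1 : ∫ s in Set.Ioi c, s * Real.exp (l * s) ∂ψ ≤ N l := by
      refine setIntegral_le_integral hI2 ?_
      filter_upwards [hpos] with s hs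
      positivity
    have h2 : c * ∫ s in Set.Ioi c, Real.exp (l * s) ∂ψ ≤
        ∫ s in Set.Ioi c, s * Real.exp (l * s) ∂ψ := by
      rw [← integral_const_mul]
      refine setIntegral_mono_on (hI1.integrableOn.const_mul c) hI2.integrableOn
        measurableSet_Ioi ?_
      intro s hs
      exact mul_le_mul_of_nonneg_right (le_of_lt hs) (Real.exp_pos _).le
    have h3 : ∫ s in (Set.Ioi c)ᶜ, Real.exp (l * s) ∂ψ ≤ Real.exp (l * c) := by
      have hb : ∫ s in (Set.Ioi c)ᶜ, Real.exp (l * s) ∂ψ ≤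
          ∫ _ in (Set.Ioi c)ᶜ, Real.exp (l * c) ∂ψ := by
        refine integral_mono_ae hI1.integrableOn (integrable_const _) ?_
        filter_upwards [ae_restrict_of_ae hpos, ae_restrict_mem measurableSet_Ioi.compl]
          with s hs hsc
        have : s ≤ c := by simpa [Set.mem_Ioi] using hsc
        exact Real.exp_le_exp.2 (by nlinarith)
      rw [setIntegral_const, smul_eq_mul, measureReal_def] at hb
      refine hb.trans ?_
      have hle1 : (ψ (Set.Ioi c)ᶜ).toReal ≤ 1 := by
        have := prob_le_one (μ := ψ) (s := (Set.Ioi c)ᶜ)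
        exact ENNReal.toReal_le_of_le_ofReal zero_le_one (by simpa using this)
      nlinarith [(Real.exp_pos (l * c)).le]
    have h4 : T l - Real.exp (l * c) ≤ ∫ s in Set.Ioi c, Real.exp (l * s) ∂ψ := by
      have := integral_add_compl (measurableSet_Ioi (a := c)) hI1
      have hTl : ∫ s in Set.Ioi c, Real.exp (l * s) ∂ψ
          + ∫ s in (Set.Ioi c)ᶜ, Real.exp (l * s) ∂ψ = T l := this
      linarith
    calc c * (T l - Real.exp (l * c)) ≤ c * ∫ s in Set.Ioi c, Real.exp (l * s) ∂ψ :=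
          mul_le_mul_of_nonneg_left h4 hc.le
      _ ≤ ∫ s in Set.Ioi c, s * Real.exp (l * s) ∂ψ := h2
      _ ≤ N l := h1
  -- lower bound on the denominator
  have hTlow : ∀ c l : ℝ, 0 ≤ l → (l : EReal) < ζ →
      Real.exp (l * c) * (ψ (Set.Ioi c)).toReal ≤ T l := by
    intro c l hl0 hlζ
    obtain ⟨hI1, _⟩ := hint l hlζ
    have h1 : ∫ s in Set.Ioi c, Real.exp (l * s) ∂ψ ≤ T l :=
      setIntegral_le_integral hI1 (ae_of_all _ fun s => (Real.exp_pos _).le)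
    have h2 : Real.exp (l * c) * (ψ (Set.Ioi c)).toReal ≤
        ∫ s in Set.Ioi c, Real.exp (l * s) ∂ψ := by
      have hb : ∫ _ in Set.Ioi c, Real.exp (l * c) ∂ψ ≤
          ∫ s in Set.Ioi c, Real.exp (l * s) ∂ψ := by
        refine setIntegral_mono_on (integrable_const _) hI1.integrableOn
          measurableSet_Ioi ?_
        intro s hs
        exact Real.exp_le_exp.2 (by nlinarith [Set.mem_Ioi.1 hs])
      rwa [setIntegral_const, smul_eq_mul, mul_comm] at hb
    linarith
  -- T tends to infinity when ζ is finite
  have hTtop : ζ ≠ ⊤ → Tendsto T L atTop := by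
    intro hne
    rw [tendsto_atTop]
    intro A
    have hA : ∃ l₀ : ℝ, (l₀ : EReal) < ζ ∧ ENNReal.ofReal A < Θ l₀ := by
      by_contra h
      push_neg at h
      have : (⨆ (l : ℝ) (_ : (l : EReal) < ζ), Θ l) ≤ ENNReal.ofReal A :=
        iSup_le fun l => iSup_le fun hl => h l hl
      rw [hblow] at this
      exact absurd (lt_of_le_of_lt this ENNReal.ofReal_lt_top) (lt_irrefl _)
    obtain ⟨l₀, hl₀, hAl₀⟩ := hA
    filter_upwards [hevlt, hevgt l₀ hl₀] with l h1 h2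
    by_contra hAl
    push_neg at hAl
    have : Θ l ≤ ENNReal.ofReal A := by
      rw [← hTofReal l h1]
      exact ENNReal.ofReal_le_ofReal hAl.le
    exact absurd (lt_of_lt_of_le hAl₀ (hmono h2.le)) (not_lt.2 this)
  -- the ratio tends to zero
  have hratio : ∀ c : ℝ, 0 < c → (c : EReal) < M →
      Tendsto (fun l => Real.exp (l * c) / T l) L (𝓝 0) := by
    intro c hc hcM
    obtain ⟨x, hx1, hx2⟩ := exists_between hcM
    have hxt : x ≠ ⊤ := (lt_of_lt_of_le hx2 le_top).ne
    have hxb : x ≠ ⊥ := (lt_trans (bot_lt_iff_ne_bot.2 (EReal.coe_ne_bot c)) hx1).ne'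
    obtain ⟨c', rfl⟩ : ∃ c' : ℝ, x = (c' : EReal) := ⟨x.toReal, (EReal.coe_toReal hxt hxb).symm⟩
    have hcc' : c < c' := by exact_mod_cast hx1
    have hp : ψ (Set.Ioi c') ≠ 0 := hIoiM c' (by linarith) hx2
    set p := (ψ (Set.Ioi c')).toReal with hpdef
    have hp0 : 0 < p := ENNReal.toReal_pos hp (measure_ne_top ψ _)
    have hTlowc : ∀ᶠ l in L, Real.exp (l * c') * p ≤ T l ∧ 0 ≤ l ∧ (l : EReal) < ζ := by
      filter_upwards [hevlt, hevgt 0 (by simpa using hζ0)] with l h1 h2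
      exact ⟨hTlow c' l h2.le h1, h2.le, h1⟩
    rcases eq_or_ne ζ ⊤ with hζtop | hζtop
    · have hid : Tendsto (fun l : ℝ => l) L atTop := by
        rw [tendsto_atTop]
        intro b
        filter_upwards [hevgt b (by rw [hζtop]; exact EReal.coe_lt_top b)] with l hl
        exact hl.le
      have hg : Tendsto (fun l : ℝ => Real.exp (l * (c - c')) / p) L (𝓝 0) := by
        have h1 : Tendsto (fun l : ℝ => l * (c - c')) L atBot := by
          exact Tendsto.atTop_mul_const_of_neg (by linarith) hid
        have h2 : Tendsto (fun l : ℝ => Real.exp (l * (c - c'))) L (𝓝 0) :=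
          Real.tendsto_exp_atBot.comp h1
        simpa using h2.div_const p
      refine squeeze_zero' ?_ ?_ hg
      · filter_upwards [hTlowc] with l hl
        have := hTpos l hl.2.2
        positivity
      · filter_upwards [hTlowc] with l hl
        have hTl := hTpos l hl.2.2
        have hden : 0 < Real.exp (l * c') * p := by positivity
        have key : Real.exp (l * c) / T l ≤ Real.exp (l * c) / (Real.exp (l * c') * p) := by
          gcongr
          exact hl.1
        refine key.trans (le_of_eq ?_)
        rw [mul_sub, Real.exp_sub, div_div]
    · -- ζ finite
      have hTt := hTtop hζtop
      obtain ⟨z, rfl⟩ : ∃ z : ℝ, ζ = (z : EReal) :=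
        ⟨ζ.toReal, (EReal.coe_toReal hζtop (by
          intro h; rw [h] at hζ0; exact absurd hζ0 (by simp))).symm⟩
      have hg : Tendsto (fun l : ℝ => Real.exp (z * c) / T l) L (𝓝 0) :=
        tendsto_const_nhds.div_atTop hTt
      refine squeeze_zero' ?_ ?_ hg
      · filter_upwards [hevlt, hevgt 0 (by simpa using hζ0)] with l h1 h2
        have := hTpos l h1
        positivity
      · filter_upwards [hevlt, hevgt 0 (by simpa using hζ0)] with l h1 h2
        have hTl := hTpos l h1
        have hlz : l ≤ z := by exact_mod_cast h1.le
        gcongr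
  -- the main lower bound
  have hlow : ∀ b : ℝ, (b : EReal) < M → ∀ᶠ l in L, b < F l := by
    intro b hbM
    have hmax : ((max b 0 : ℝ) : EReal) < M := by
      rcases le_total b 0 with h | h
      · rw [max_eq_right h]; exact hM0
      · rw [max_eq_left h]; exact hbM
    obtain ⟨x, hx1, hx2⟩ := exists_between hmax
    have hxt : x ≠ ⊤ := (lt_of_lt_of_le hx2 le_top).ne
    have hxb : x ≠ ⊥ := (lt_trans (bot_lt_iff_ne_bot.2 (EReal.coe_ne_bot _)) hx1).ne'
    obtain ⟨c, rfl⟩ : ∃ c : ℝ, x = (c : EReal) := ⟨x.toReal, (EReal.coe_toReal hxt hxb).symm⟩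
    have hbc : max b 0 < c := by exact_mod_cast hx1
    have hc0 : 0 < c := lt_of_le_of_lt (le_max_right b 0) hbc
    have hbc' : b < c := lt_of_le_of_lt (le_max_left b 0) hbc
    have hr := hratio c hc0 hx2
    have hcv : Tendsto (fun l => c * (1 - Real.exp (l * c) / T l)) L (𝓝 c) := by
      have := (tendsto_const_nhds (x := (1:ℝ)) (f := L)).sub hr
      have h2 := this.const_mul c
      simpa using h2
    have hev : ∀ᶠ l in L, b < c * (1 - Real.exp (l * c) / T l) :=
      hcv.eventually (eventually_gt_nhds hbc')
    filter_upwards [hev, hevlt, hevgt 0 (by simpa using hζ0)] with l hbl hlζ hl0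
    have hTl := hTpos l hlζ
    have hNl := hNlow c l hc0 hl0.le hlζ
    have hFl : F l = N l / T l := hF l
    have key : c * (1 - Real.exp (l * c) / T l) ≤ F l := by
      rw [hFl]
      have : c * (1 - Real.exp (l * c) / T l) = c * (T l - Real.exp (l * c)) / T l := by
        field_simp
      rw [this]
      gcongr
    exact lt_of_lt_of_le hbl key
  -- now split on M
  rcases eq_or_ne M ⊤ with hMtop | hMtop
  · rw [hMtop]
    rw [EReal.tendsto_nhds_top_iff_real]
    intro x
    filter_upwards [hlow x (by rw [hMtop]; exact EReal.coe_lt_top x)] with l hl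
    exact_mod_cast hl
  · have hMb : M ≠ ⊥ := (lt_trans (bot_lt_iff_ne_bot.2 (by simp)) hM0).ne'
    obtain ⟨m, rfl⟩ : ∃ m : ℝ, M = (m : EReal) := ⟨M.toReal, (EReal.coe_toReal hMtop hMb).symm⟩
    -- ψ (Ioi m) = 0
    have hIm : ψ (Set.Ioi m) = 0 := by
      have hz : ∀ n : ℕ, ψ (Set.Ioi (m + 1 / (n + 1 : ℝ))) = 0 := by
        intro n
        have hlt : (m : EReal) < ((m + 1 / (n + 1 : ℝ) : ℝ) : EReal) := by
          have : m < m + 1 / (n + 1 : ℝ) := lt_add_of_pos_right m (by positivity)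
          exact_mod_cast this
        rw [hM] at hlt
        obtain ⟨x, hx, hxlt⟩ := sInf_lt_iff.1 hlt
        obtain ⟨c, ⟨hc0, hc⟩, rfl⟩ := hx
        have hxlt' : (c : EReal) < ((m + 1 / (n + 1 : ℝ) : ℝ) : EReal) := hxlt
        have hcc : c ≤ m + 1 / (n + 1 : ℝ) := le_of_lt (by exact_mod_cast hxlt')
        exact measure_mono_null (Set.Ioi_subset_Ioi hcc) hc
      have hU : Set.Ioi m = ⋃ n : ℕ, Set.Ioi (m + 1 / (n + 1 : ℝ)) := by
        ext x
        simp only [Set.mem_Ioi, Set.mem_iUnion]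
        constructor
        · intro hx
          obtain ⟨n, hn⟩ := exists_nat_one_div_lt (sub_pos.2 hx)
          exact ⟨n, by linarith⟩
        · rintro ⟨n, hn⟩
          have : (0:ℝ) < 1 / (n + 1 : ℝ) := by positivity
          linarith
      rw [hU]
      exact measure_iUnion_null hz
    have haem : ∀ᵐ s ∂ψ, s ≤ m := by
      have h : (Set.Ioi m) = {s : ℝ | ¬ s ≤ m} := by ext s; simp [Set.mem_Ioi]
      rw [ae_iff, ← h]; exact hIm
    have hupper : ∀ l : ℝ, (l : EReal) < ζ → F l ≤ m := by
      intro l hl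
      obtain ⟨hI1, hI2⟩ := hint l hl
      have hNT : N l ≤ m * T l := by
        have heq : m * T l = ∫ s, m * Real.exp (l * s) ∂ψ := (integral_const_mul m _).symm
        rw [heq]
        refine integral_mono_ae hI2 (hI1.const_mul m) ?_
        filter_upwards [haem] with s hs
        exact mul_le_mul_of_nonneg_right hs (Real.exp_pos _).le
      rw [hF l]
      rw [div_le_iff₀ (hTpos l hl)]
      exact hNT
    rw [EReal.tendsto_coe]
    rw [tendsto_order]
    constructor
    · intro b hb
      exact hlow b (by exact_mod_cast hb)
    · intro b hb
      filter_upwards [hevlt] with l hl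
      exact lt_of_le_of_lt (hupper l hl) hb
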